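/- For each fixed ℓ ∈ ℕ₀, the set {u(ℓ) + u(k) : k ∈ ℕ₀} equals {u(k) : k ∈ ℕ₀}; i.e., translation by u(ℓ) permutes the set of coset representatives u(ℕ₀). -/

import Mathlib

/-- The single-digit representative: for `n` with base-`p` digits `a_0, …, a_{c-1}`,
`ub(n) = (a_0·ζ_0 + a_1·ζ_1 + ⋯ + a_{c-1}·ζ_{c-1})·𝔭⁻¹`. -/
noncomputable def ubMap {K : Type*} [Field K] (p c : ℕ) (ζ : Fin c → K) (pp : K)
    (n : ℕ) : K :=
  (∑ i : Fin c, ((n / p ^ (i : ℕ)) % p : ℕ) • ζ i) * pp⁻¹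

/-- The digit-wise coset-representative map: for `n` with base-`q` digits
`b_0, b_1, …, b_s`, `u(n) = ub(b_0) + ub(b_1)·𝔭⁻¹ + ⋯ + ub(b_s)·𝔭⁻ˢ`. -/
noncomputable def uMap {K : Type*} [Field K] (q : ℕ) (pp : K) (ub : ℕ → K) (n : ℕ) : K :=
  ((Nat.digits q n).zipIdx.map (fun ib => ub ib.1 * pp⁻¹ ^ ib.2)).sum

/- ### Auxiliary digit lemmas -/

lemma digitSum_lt (b N : ℕ) (hb : 0 < b) (d : ℕ → ℕ) (hd : ∀ t < N, d t < b) :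
    (∑ t ∈ Finset.range N, d t * b ^ t) < b ^ N := by
  induction N with
  | zero => simp
  | succ N ih =>
    rw [Finset.sum_range_succ, pow_succ]
    have h1 : (∑ t ∈ Finset.range N, d t * b ^ t) < b ^ N :=
      ih (fun t ht => hd t (ht.trans (Nat.lt_succ_self N)))
    have h2 : d N * b ^ N ≤ (b - 1) * b ^ N :=
      Nat.mul_le_mul_right _ (Nat.le_sub_one_of_lt (hd N (Nat.lt_succ_self N)))
    have hb' : b - 1 + 1 = b := Nat.succ_pred_eq_of_pos hb
    calc (∑ t ∈ Finset.range N, d t * b ^ t) + d N * b ^ N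
        < b ^ N + (b - 1) * b ^ N := by omega
      _ = (b - 1 + 1) * b ^ N := by ring
      _ = b ^ N * b := by rw [hb']; ring

lemma digitSum_digit (b N : ℕ) (hb : 1 < b) (d : ℕ → ℕ) (hd : ∀ t < N, d t < b)
    (t : ℕ) (ht : t < N) :
    (∑ j ∈ Finset.range N, d j * b ^ j) / b ^ t % b = d t := by
  have hbpos : 0 < b := by omega
  have hsplit : (∑ j ∈ Finset.range N, d j * b ^ j)
      = (∑ j ∈ Finset.range t, d j * b ^ j) + d t * b ^ t
        + b ^ (t + 1) * (∑ j ∈ Finset.range (N - (t + 1)), d (t + 1 + j) * b ^ j) := by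
    rw [← Finset.sum_range_succ]
    rw [← Finset.sum_range_add_sum_Ico _ (by omega : t + 1 ≤ N)]
    congr 1
    rw [Finset.mul_sum, Finset.sum_Ico_eq_sum_range]
    apply Finset.sum_congr rfl
    intro j _
    rw [pow_add]
    ring
  set A := ∑ j ∈ Finset.range t, d j * b ^ j with hA
  set C := ∑ j ∈ Finset.range (N - (t + 1)), d (t + 1 + j) * b ^ j with hC
  have hAlt : A < b ^ t := digitSum_lt b t hbpos d (fun j hj => hd j (hj.trans ht))
  have : (∑ j ∈ Finset.range N, d j * b ^ j) = A + b ^ t * (d t + b * C) := by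
    rw [hsplit, pow_succ]; ring
  rw [this, Nat.add_mul_div_left _ _ (pow_pos hbpos t),
    Nat.div_eq_of_lt hAlt, zero_add, Nat.add_mul_mod_self_left,
    Nat.mod_eq_of_lt (hd t ht)]

lemma digits_getD (q : ℕ) (hq : 1 < q) (n : ℕ) :
    ∀ j, (Nat.digits q n).getD j 0 = n / q ^ j % q := by
  induction n using Nat.strong_induction_on with
  | _ n ih =>
    intro j
    rcases Nat.eq_zero_or_pos n with rfl | hn
    · simp
    · rw [Nat.digits_def' hq hn]
      cases j with
      | zero => simp
      | succ j =>
        have hlt : n / q < n := Nat.div_lt_self hn hq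
        simp only [List.getD_cons_succ]
        rw [ih _ hlt j, Nat.div_div_eq_div_mul, ← pow_succ']

lemma enumFrom_sum {K : Type*} [Field K] (f : ℕ → K) (x : K) :
    ∀ (L : List ℕ) (s : ℕ),
      ((L.zipIdx s).map (fun ib => f ib.1 * x ^ ib.2)).sum
        = ∑ j ∈ Finset.range L.length, f (L.getD j 0) * x ^ (s + j) := by
  intro L
  induction L with
  | nil => simp
  | cons a L ih =>
    intro s
    rw [List.zipIdx_cons, List.map_cons, List.sum_cons, ih (s + 1)]
    rw [List.length_cons, Finset.sum_range_succ']
    simp only [List.getD_cons_succ, List.getD_cons_zero]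
    rw [add_comm]
    congr 1
    apply Finset.sum_congr rfl
    intro j _
    rw [show s + 1 + j = s + (j + 1) by omega]

lemma uMap_eq_sum {K : Type*} [Field K] (q : ℕ) (hq : 1 < q) (pp : K) (ub : ℕ → K)
    (hub0 : ub 0 = 0) (n N : ℕ) (hn : n < q ^ N) :
    uMap q pp ub n = ∑ j ∈ Finset.range N, ub (n / q ^ j % q) * pp⁻¹ ^ j := by
  unfold uMap
  rw [enumFrom_sum]
  simp only [zero_add]
  have hform : ∀ j ∈ Finset.range (Nat.digits q n).length,
      ub ((Nat.digits q n).getD j 0) * pp⁻¹ ^ j = ub (n / q ^ j % q) * pp⁻¹ ^ j := by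
    intro j _; rw [digits_getD q hq n j]
  rw [Finset.sum_congr rfl hform]
  set M := max (Nat.digits q n).length N with hM
  have key : ∀ T, (Nat.digits q n).length ≤ T ∨ N ≤ T →
      (∑ j ∈ Finset.range T, ub (n / q ^ j % q) * pp⁻¹ ^ j)
        = ∑ j ∈ Finset.range M, ub (n / q ^ j % q) * pp⁻¹ ^ j → True := fun _ _ _ => trivial
  have hzero : ∀ j, (Nat.digits q n).length ≤ j ∨ N ≤ j → n / q ^ j % q = 0 := by
    intro j hj
    have hnlt : n < q ^ j := by
      rcases hj with hj | hj
      · exact lt_of_lt_of_le (Nat.lt_base_pow_length_digits hq)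
          (Nat.pow_le_pow_right (by omega) hj)
      · exact lt_of_lt_of_le hn (Nat.pow_le_pow_right (by omega) hj)
    rw [Nat.div_eq_of_lt hnlt]; simp
  have h1 : (∑ j ∈ Finset.range (Nat.digits q n).length, ub (n / q ^ j % q) * pp⁻¹ ^ j)
      = ∑ j ∈ Finset.range M, ub (n / q ^ j % q) * pp⁻¹ ^ j := by
    apply Finset.sum_subset (Finset.range_subset_range.2 (le_max_left _ _))
    intro j _ hj
    rw [hzero j (Or.inl (by simpa using hj))]
    simp [hub0]
  have h2 : (∑ j ∈ Finset.range N, ub (n / q ^ j % q) * pp⁻¹ ^ j)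
      = ∑ j ∈ Finset.range M, ub (n / q ^ j % q) * pp⁻¹ ^ j := by
    apply Finset.sum_subset (Finset.range_subset_range.2 (le_max_right _ _))
    intro j _ hj
    rw [hzero j (Or.inr (by simpa using hj))]
    simp [hub0]
  rw [h1, ← h2]

section Main

variable {K : Type*} [Field K] (p : ℕ) [Fact p.Prime] [CharP K p] (c : ℕ) (hc : 0 < c)
  (q : ℕ) (hq : q = p ^ c) (ζ : Fin c → K) (pp : K)

lemma hp1 : 1 < p := (Fact.out : p.Prime).one_lt

include hc hq in
lemma hq1 : 1 < q := by
  rw [hq]; exact Nat.one_lt_pow (by omega) (hp1 p)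

lemma ubMap_zero : ubMap p c ζ pp 0 = 0 := by
  unfold ubMap
  simp

/-- Cast of `a % p` to a char-`p` field equals cast of `a`. -/
lemma cast_mod_p (a : ℕ) : (((a % p : ℕ) : K)) = (a : K) := by
  conv_rhs => rw [← Nat.div_add_mod a p]
  push_cast
  simp [CharP.cast_eq_zero K p]

include hc hq in
/-- `uMap` expanded as a double sum over base-`p` digits. -/
lemma uMap_expand (n N : ℕ) (hn : n < p ^ (c * N)) :
    uMap q pp (ubMap p c ζ pp) n
      = ∑ j ∈ Finset.range N, ∑ i : Fin c,
          (((n / p ^ (c * j + (i : ℕ)) % p : ℕ)) : K) * (ζ i * pp⁻¹ ^ (j + 1)) := by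
  have hp : 1 < p := hp1 p
  have hnq : n < q ^ N := by rw [hq, ← pow_mul]; exact hn
  rw [uMap_eq_sum q (hq1 p c hc q hq) pp _ (ubMap_zero p c ζ pp) n N hnq]
  apply Finset.sum_congr rfl
  intro j _
  unfold ubMap
  rw [Finset.sum_mul, Finset.sum_mul]
  apply Finset.sum_congr rfl
  intro i _
  have hdigit : n / q ^ j % q / p ^ (i : ℕ) % p = n / p ^ (c * j + (i : ℕ)) % p := by
    rw [hq, ← pow_mul]
    have hsplit : p ^ c = p ^ (i : ℕ) * p ^ (c - (i : ℕ)) := by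
      rw [← pow_add]; congr 1; omega
    rw [hsplit, Nat.mod_mul_right_div_self, Nat.div_div_eq_div_mul, ← pow_add]
    rw [Nat.mod_mod_of_dvd _ (dvd_pow_self p (by omega : c - (i : ℕ) ≠ 0))]
  rw [hdigit, nsmul_eq_mul, pow_succ]
  ring

include hc hq in
/-- Core additivity: if the base-`p` digits of `m` equal digit-wise sums of those of
`a` and `b` (after casting to `K`), then `u a + u b = u m`. -/
lemma uMap_add_eq (a b m N : ℕ) (ha : a < p ^ (c * N)) (hb : b < p ^ (c * N))
    (hm : m < p ^ (c * N))
    (h : ∀ t < c * N, ((a / p ^ t % p : ℕ) : K) + ((b / p ^ t % p : ℕ) : K)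
          = ((m / p ^ t % p : ℕ) : K)) :
    uMap q pp (ubMap p c ζ pp) a + uMap q pp (ubMap p c ζ pp) b
      = uMap q pp (ubMap p c ζ pp) m := by
  rw [uMap_expand p c hc q hq ζ pp a N ha, uMap_expand p c hc q hq ζ pp b N hb,
    uMap_expand p c hc q hq ζ pp m N hm, ← Finset.sum_add_distrib]
  apply Finset.sum_congr rfl
  intro j hj
  rw [← Finset.sum_add_distrib]
  apply Finset.sum_congr rfl
  intro i _
  rw [← add_mul]
  congr 1
  apply h
  have hjN : j < N := Finset.mem_range.1 hj
  have : (i : ℕ) < c := i.2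
  calc c * j + (i : ℕ) < c * j + c := by omega
    _ ≤ c * N := by
        rw [← Nat.mul_succ]
        exact Nat.mul_le_mul_left c hjN

end Main

/-- For each fixed `ℓ`, the set `{u(ℓ) + u(k) : k ∈ ℕ}` equals `{u(k) : k ∈ ℕ}`:
translation by `u(ℓ)` permutes the set of coset representatives. -/
theorem range_add_uMap_eq_range {K : Type*} [Field K]
    (p : ℕ) [Fact p.Prime] [CharP K p] (c : ℕ) (hc : 0 < c)
    (q : ℕ) (hq : q = p ^ c)
    (ζ : Fin c → K) (hζ0 : ζ ⟨0, hc⟩ = 1)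
    (pp : K) (hpp : pp ≠ 0) (ℓ : ℕ) :
    Set.range (fun k : ℕ => uMap q pp (ubMap p c ζ pp) ℓ + uMap q pp (ubMap p c ζ pp) k)
      = Set.range (fun k : ℕ => uMap q pp (ubMap p c ζ pp) k) := by
  have hp : 1 < p := hp1 p
  have hppos : 0 < p := by omega
  ext y
  constructor
  · rintro ⟨k, rfl⟩
    -- choose N covering both ℓ and k
    set N := ℓ + k + 1 with hN
    have hℓ : ℓ < p ^ (c * N) := by
      calc ℓ < p ^ ℓ := Nat.lt_pow_self hp
        _ ≤ p ^ (c * N) := Nat.pow_le_pow_right (by omega) (by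
            calc ℓ ≤ N := by omega
              _ = 1 * N := (one_mul N).symm
              _ ≤ c * N := Nat.mul_le_mul_right N hc)
    have hk : k < p ^ (c * N) := by
      calc k < p ^ k := Nat.lt_pow_self hp
        _ ≤ p ^ (c * N) := Nat.pow_le_pow_right (by omega) (by
            calc k ≤ N := by omega
              _ = 1 * N := (one_mul N).symm
              _ ≤ c * N := Nat.mul_le_mul_right N hc)
    set d : ℕ → ℕ := fun t => (ℓ / p ^ t % p + k / p ^ t % p) % p with hd
    set m := ∑ t ∈ Finset.range (c * N), d t * p ^ t with hm
    have hdlt : ∀ t < c * N, d t < p := fun t _ => Nat.mod_lt _ hppos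
    have hmlt : m < p ^ (c * N) := digitSum_lt p (c * N) hppos d hdlt
    refine ⟨m, ?_⟩
    symm
    apply uMap_add_eq p c hc q hq ζ pp ℓ k m N hℓ hk hmlt
    intro t ht
    rw [digitSum_digit p (c * N) hp d hdlt t ht]
    show ((ℓ / p ^ t % p : ℕ) : K) + ((k / p ^ t % p : ℕ) : K)
      = (((ℓ / p ^ t % p + k / p ^ t % p) % p : ℕ) : K)
    rw [cast_mod_p p (ℓ / p ^ t % p + k / p ^ t % p)]
    push_cast
    ring
  · rintro ⟨k, rfl⟩
    set N := ℓ + k + 1 with hN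
    have hℓ : ℓ < p ^ (c * N) := by
      calc ℓ < p ^ ℓ := Nat.lt_pow_self hp
        _ ≤ p ^ (c * N) := Nat.pow_le_pow_right (by omega) (by
            calc ℓ ≤ N := by omega
              _ = 1 * N := (one_mul N).symm
              _ ≤ c * N := Nat.mul_le_mul_right N hc)
    have hk : k < p ^ (c * N) := by
      calc k < p ^ k := Nat.lt_pow_self hp
        _ ≤ p ^ (c * N) := Nat.pow_le_pow_right (by omega) (by
            calc k ≤ N := by omega
              _ = 1 * N := (one_mul N).symm
              _ ≤ c * N := Nat.mul_le_mul_right N hc)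
    set d : ℕ → ℕ := fun t => (k / p ^ t % p + (p - 1) * (ℓ / p ^ t % p)) % p with hd
    set k' := ∑ t ∈ Finset.range (c * N), d t * p ^ t with hk'
    have hdlt : ∀ t < c * N, d t < p := fun t _ => Nat.mod_lt _ hppos
    have hk'lt : k' < p ^ (c * N) := digitSum_lt p (c * N) hppos d hdlt
    refine ⟨k', ?_⟩
    apply uMap_add_eq p c hc q hq ζ pp ℓ k' k N hℓ hk'lt hk
    intro t ht
    rw [digitSum_digit p (c * N) hp d hdlt t ht]
    show ((ℓ / p ^ t % p : ℕ) : K) + (((k / p ^ t % p + (p - 1) * (ℓ / p ^ t % p)) % p : ℕ) : K)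
      = ((k / p ^ t % p : ℕ) : K)
    rw [cast_mod_p p (k / p ^ t % p + (p - 1) * (ℓ / p ^ t % p))]
    have hpK : ((p : ℕ) : K) = 0 := CharP.cast_eq_zero K p
    have hp1K : (((p - 1 : ℕ)) : K) = (p : K) - 1 := by
      rw [Nat.cast_sub (by omega : 1 ≤ p)]; simp
    push_cast [hp1K]
    rw [hpK]
    ring
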